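/- Let X be a nonempty compact metric space, let f_1, …, f_N : X → X be continuous contraction maps (each Lipschitz with some constant < 1), let p_1, …, p_N be positive reals summing to 1, and let μ be the measure attractor, i.e. the unique Borel probability measure with μ = Σ_i p_i (f_i)_# μ. Let (I_k)_{k ≥ 0} be independent random variables, each taking value i with probability p_i, fix any x_0 ∈ X, and define the random orbit x_{k+1} = f_{I_k}(x_k). Then with probability one the empirical measures (1/k) Σ_{j=0}^{k-1} δ_{x_j} converge weakly to μ as k → ∞. -/

import Mathlib

open MeasureTheory ProbabilityTheory NNReal ENNReal Filter


lemma cg_steps_bound {C : ℝ} (a : ℕ → ℝ) (hstep : ∀ k, |a (k + 1) - a k| ≤ C) :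
    ∀ m d : ℕ, |a (m + d) - a m| ≤ C * d := by
  intro m d
  induction d with
  | zero => simp
  | succ d ih =>
      have h1 := hstep (m + d)
      have h2 : |a (m + (d+1)) - a m| ≤ |a (m + d + 1) - a (m + d)| + |a (m + d) - a m| := by
        have h3 : a (m + (d+1)) - a m = (a (m + d + 1) - a (m + d)) + (a (m + d) - a m) := by
          ring_nf
        rw [h3]; exact abs_add_le _ _
      push_cast
      nlinarith [abs_nonneg (a (m+d+1) - a (m+d))]

lemma cg_sqrt_tendsto : Tendsto (fun k : ℕ => Nat.sqrt k) atTop atTop := by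
  apply tendsto_atTop_atTop.2
  intro b
  exact ⟨b ^ 2, fun k hk => Nat.le_sqrt'.2 hk⟩

lemma cg_gap_fill {C : ℝ} (hC : 0 ≤ C) (a : ℕ → ℝ) (ha0 : a 0 = 0)
    (hstep : ∀ k, |a (k + 1) - a k| ≤ C)
    (h2 : Tendsto (fun n : ℕ => a ((n + 1) ^ 2) / ((n + 1 : ℕ) ^ 2 : ℝ)) atTop (nhds 0)) :
    Tendsto (fun k : ℕ => a k / k) atTop (nhds 0) := by
  have hdiff : ∀ m k : ℕ, m ≤ k → |a k - a m| ≤ C * (k - m : ℕ) := by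
    intro m k hmk
    obtain ⟨d, rfl⟩ := Nat.exists_eq_add_of_le hmk
    simpa using cg_steps_bound a hstep m d
  have hctend : Tendsto
      (fun n : ℕ => |a ((n + 1) ^ 2)| / ((n + 1 : ℕ) ^ 2 : ℝ) + 2 * C / ((n:ℝ) + 1)) atTop
      (nhds 0) := by
    have h2' : Tendsto (fun n : ℕ => |a ((n + 1) ^ 2)| / ((n + 1 : ℕ) ^ 2 : ℝ)) atTop (nhds 0) := by
      have := h2.abs
      simpa [abs_div] using this
    have h3 : Tendsto (fun n : ℕ => 2 * C / ((n:ℝ) + 1)) atTop (nhds 0) := by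
      apply Tendsto.div_atTop (tendsto_const_nhds (x := 2 * C))
      exact tendsto_atTop_add_const_right _ 1 tendsto_natCast_atTop_atTop
    simpa using h2'.add h3
  apply squeeze_zero_norm'
    (a := fun k : ℕ => |a ((Nat.sqrt k - 1 + 1) ^ 2)| / ((Nat.sqrt k - 1 + 1 : ℕ) ^ 2 : ℝ)
      + 2 * C / ((Nat.sqrt k - 1 : ℕ) + 1 : ℝ))
  · filter_upwards [eventually_ge_atTop 1] with k hk
    set n := Nat.sqrt k with hn
    have hn1 : 1 ≤ n := Nat.le_sqrt'.2 (by simpa using hk)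
    have hnn : n - 1 + 1 = n := Nat.succ_pred_eq_of_pos hn1
    have hlow : n ^ 2 ≤ k := by simpa [pow_two] using Nat.sqrt_le' k
    have hhigh : k < (n + 1) ^ 2 := by simpa [pow_two] using Nat.lt_succ_sqrt' k
    have hkpos : (0:ℝ) < k := by positivity
    have hn2pos : (0:ℝ) < ((n:ℝ) ^ 2) := by positivity
    have hnpos : (0:ℝ) < (n:ℝ) := by exact_mod_cast hn1
    have hd : |a k - a (n ^ 2)| ≤ C * (k - n ^ 2 : ℕ) := hdiff _ _ hlow
    have hgap : ((k - n ^ 2 : ℕ) : ℝ) ≤ 2 * n := by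
      have h4 : k - n ^ 2 ≤ 2 * n :=
        Nat.sub_le_iff_le_add.2 (by nlinarith [hhigh])
      calc ((k - n ^ 2 : ℕ) : ℝ) ≤ ((2 * n : ℕ) : ℝ) := by exact_mod_cast h4
        _ = 2 * n := by push_cast; ring
    have hak : |a k| ≤ |a (n ^ 2)| + C * (2 * n) := by
      have h5 := abs_sub_abs_le_abs_sub (a k) (a (n ^ 2))
      have h6 : C * ((k - n ^ 2 : ℕ) : ℝ) ≤ C * (2 * n) := mul_le_mul_of_nonneg_left hgap hC
      linarith
    have hn2k : ((n:ℝ) ^ 2) ≤ k := by exact_mod_cast hlow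
    have hnorm : ‖a k / (k:ℝ)‖ = |a k| / k := by
      rw [Real.norm_eq_abs, abs_div, abs_of_pos hkpos]
    rw [hnorm]
    have key : |a k| / (k:ℝ) ≤ |a (n ^ 2)| / ((n:ℝ) ^ 2) + 2 * C / n := by
      have h7 : |a k| / (k:ℝ) ≤ (|a (n ^ 2)| + C * (2 * (n:ℝ))) / ((n:ℝ) ^ 2) :=
        div_le_div₀ (by nlinarith [abs_nonneg (a (n ^ 2))]) hak hn2pos hn2k
      have h8 := h7
      have h9 : (|a (n ^ 2)| + C * (2 * (n:ℝ))) / ((n:ℝ) ^ 2)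
          = |a (n ^ 2)| / ((n:ℝ) ^ 2) + 2 * C / n := by
        field_simp
      linarith
    have hcast : ((n - 1 + 1 : ℕ) : ℝ) = (n : ℝ) := by rw [hnn]
    calc |a k| / (k:ℝ) ≤ |a (n ^ 2)| / ((n:ℝ) ^ 2) + 2 * C / n := key
      _ = |a ((n - 1 + 1) ^ 2)| / (((n - 1 + 1 : ℕ) : ℝ) ^ 2) + 2 * C / (((n - 1 : ℕ) : ℝ) + 1) := by
          have hcast2 : ((n - 1 : ℕ) : ℝ) + 1 = (n:ℝ) := by exact_mod_cast hnn
          rw [hnn, hcast2]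
  · exact hctend.comp ((tendsto_sub_atTop_nat 1).comp cg_sqrt_tendsto)


lemma cg_lipschitz_approx {X : Type*} [MetricSpace X] [CompactSpace X] [Nonempty X]
    (g : C(X, ℝ)) {ε : ℝ} (hε : 0 < ε) :
    ∃ (L : ℝ≥0) (g' : X → ℝ), LipschitzWith L g' ∧ ∀ x, |g' x - g x| ≤ ε := by
  obtain ⟨M, hM⟩ : ∃ M, ∀ x, |g x| ≤ M := by
    obtain ⟨C, hC⟩ := (isCompact_univ (X := X)).exists_bound_of_continuousOn
      g.continuous.continuousOn
    exact ⟨C, fun x => by simpa [Real.norm_eq_abs] using hC x (Set.mem_univ x)⟩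
  have hg : UniformContinuous g := CompactSpace.uniformContinuous_of_continuous g.continuous
  obtain ⟨δ, hδ, hδ'⟩ := Metric.uniformContinuous_iff.1 hg ε hε
  set L : ℝ := max 1 ((2 * M + 1) / δ) with hL
  have hL0 : 0 < L := lt_of_lt_of_le one_pos (le_max_left _ _)
  have hLδ : 2 * M + 1 ≤ L * δ := by
    have : (2 * M + 1) / δ ≤ L := le_max_right _ _
    calc 2 * M + 1 = ((2 * M + 1) / δ) * δ := by field_simp
      _ ≤ L * δ := by apply mul_le_mul_of_nonneg_right this hδ.le
  set g' : X → ℝ := fun x => ⨅ y, (g y + L * dist x y) with hg'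
  have hbdd : ∀ x : X, BddBelow (Set.range fun y => g y + L * dist x y) := by
    intro x
    refine ⟨-M, ?_⟩
    rintro _ ⟨y, rfl⟩
    show -M ≤ g y + L * dist x y
    have := hM y
    have : -M ≤ g y := by cases abs_le.1 (hM y); linarith
    nlinarith [dist_nonneg (x := x) (y := y), hL0]
  have hle : ∀ x, g' x ≤ g x := by
    intro x
    have := ciInf_le (hbdd x) x
    simpa using this
  have hge : ∀ x, g x - ε ≤ g' x := by
    intro x
    apply le_ciInf
    intro y
    by_cases hd : dist x y < δ
    · have := hδ' hd
      have h1 : |g x - g y| < ε := by simpa [Real.dist_eq] using this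
      have h2 := abs_lt.1 h1
      nlinarith [dist_nonneg (x := x) (y := y), hL0]
    · push_neg at hd
      have h1 : L * δ ≤ L * dist x y := mul_le_mul_of_nonneg_left hd hL0.le
      have h2 := abs_le.1 (hM x)
      have h3 := abs_le.1 (hM y)
      nlinarith
  have hlip : ∀ x x', g' x ≤ g' x' + L * dist x x' := by
    intro x x'
    rw [← sub_le_iff_le_add]
    apply le_ciInf
    intro y
    have h1 : g' x ≤ g y + L * dist x y := ciInf_le (hbdd x) y
    have h2 : dist x y ≤ dist x x' + dist x' y := dist_triangle x x' y
    nlinarith [mul_le_mul_of_nonneg_left h2 hL0.le]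
  refine ⟨⟨L, hL0.le⟩, g', ?_, ?_⟩
  · apply LipschitzWith.of_dist_le_mul
    intro x x'
    rw [Real.dist_eq]
    change |g' x - g' x'| ≤ L * dist x x'
    have h1 := hlip x x'
    have h2 := hlip x' x
    rw [dist_comm x' x] at h2
    rw [abs_le]
    constructor <;> [linarith; linarith]
  · intro x
    rw [abs_le]
    exact ⟨by linarith [hge x], by linarith [hle x]⟩

lemma cg_integrable_of_bdd {Ω : Type*} [MeasurableSpace Ω] {P : Measure Ω} [IsFiniteMeasure P]
    {g : Ω → ℝ} (hg : Measurable g) {C : ℝ} (h : ∀ ω, |g ω| ≤ C) : Integrable g P :=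
  ⟨hg.aestronglyMeasurable,
    HasFiniteIntegral.of_bounded (C := C) (ae_of_all _ (by simpa [Real.norm_eq_abs] using h))⟩

lemma cg_ae_tendsto_zero_of_sum_sq {Ω : Type*} [MeasurableSpace Ω] (P : Measure Ω)
    [IsProbabilityMeasure P] (Y : ℕ → Ω → ℝ) (hmeas : ∀ n, Measurable (Y n))
    (B : ℕ → ℝ) (hB : Summable B)
    (hbound : ∀ n, ∫⁻ ω, ENNReal.ofReal ((Y n ω) ^ 2) ∂P ≤ ENNReal.ofReal (B n)) :
    ∀ᵐ ω ∂P, Tendsto (fun n => Y n ω) atTop (nhds 0) := by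
  have hBsum : (∑' n, ENNReal.ofReal (B n)) < ⊤ := by
    calc (∑' n, ENNReal.ofReal (B n)) ≤ ∑' n, ENNReal.ofReal |B n| := by
          exact ENNReal.tsum_le_tsum fun n => ENNReal.ofReal_le_ofReal (le_abs_self _)
      _ = ENNReal.ofReal (∑' n, |B n|) := by
          rw [ENNReal.ofReal_tsum_of_nonneg (fun n => abs_nonneg _) hB.abs]
      _ < ⊤ := ENNReal.ofReal_lt_top
  have hkey : ∫⁻ ω, (∑' n, ENNReal.ofReal ((Y n ω) ^ 2)) ∂P < ⊤ := by
    rw [lintegral_tsum fun n => ((hmeas n).pow_const 2).ennreal_ofReal.aemeasurable]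
    exact lt_of_le_of_lt (ENNReal.tsum_le_tsum hbound) hBsum
  have hae : ∀ᵐ ω ∂P, (∑' n, ENNReal.ofReal ((Y n ω) ^ 2)) < ⊤ :=
    ae_lt_top (by
      exact Measurable.ennreal_tsum fun n => ((hmeas n).pow_const 2).ennreal_ofReal) hkey.ne
  filter_upwards [hae] with ω hω
  have h1 : Tendsto (fun n => ENNReal.ofReal ((Y n ω) ^ 2)) atTop (nhds 0) :=
    ENNReal.tendsto_atTop_zero_of_tsum_ne_top hω.ne
  have h2 : Tendsto (fun n => (Y n ω) ^ 2) atTop (nhds 0) := by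
    have h3 : Tendsto (fun n => (ENNReal.ofReal ((Y n ω) ^ 2)).toReal) atTop (nhds 0) := by
      simpa [Function.comp_def] using (ENNReal.tendsto_toReal (by simp)).comp h1
    have h4 : ∀ n, (ENNReal.ofReal ((Y n ω) ^ 2)).toReal = (Y n ω) ^ 2 := fun n =>
      ENNReal.toReal_ofReal (sq_nonneg _)
    simpa [h4] using h3
  apply squeeze_zero_norm' (a := fun n => Real.sqrt ((Y n ω) ^ 2))
  · filter_upwards with n
    rw [Real.sqrt_sq_eq_abs, Real.norm_eq_abs]
  · have : Tendsto Real.sqrt (nhds 0) (nhds 0) := by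
      simpa using (Real.continuous_sqrt.tendsto 0)
    exact this.comp h2

noncomputable def cgTraj {X : Type*} {N : ℕ} (f : Fin N → X → X) (x₀ : X) :
    ∀ l : ℕ, (Fin l → Fin N) → X
  | 0 => fun _ => x₀
  | (l + 1) => fun σ => f (σ (Fin.last l)) (cgTraj f x₀ l (σ ∘ Fin.castSucc))

lemma cgTraj_zero {X : Type*} {N : ℕ} (f : Fin N → X → X) (x₀ : X) (σ : Fin 0 → Fin N) :
    cgTraj f x₀ 0 σ = x₀ := rfl

lemma cgTraj_succ {X : Type*} {N : ℕ} (f : Fin N → X → X) (x₀ : X) (l : ℕ)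
    (σ : Fin (l + 1) → Fin N) :
    cgTraj f x₀ (l + 1) σ = f (σ (Fin.last l)) (cgTraj f x₀ l (σ ∘ Fin.castSucc)) := rfl

theorem cg_key
    {X : Type*} [MetricSpace X] [CompactSpace X] [Nonempty X]
    [MeasurableSpace X] [BorelSpace X]
    {N : ℕ} (hN : 1 ≤ N) (f : Fin N → X → X) (r : Fin N → ℝ≥0)
    (hr : ∀ i, r i < 1) (hf : ∀ i, LipschitzWith (r i) (f i))
    (p : Fin N → ℝ) (hp : ∀ i, 0 < p i) (hpsum : ∑ i, p i = 1)
    (μ : Measure X) [IsProbabilityMeasure μ]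
    (hμ : μ = ∑ i, ENNReal.ofReal (p i) • μ.map (f i))
    {Ω : Type*} [MeasurableSpace Ω] (P : Measure Ω) [IsProbabilityMeasure P]
    (I : ℕ → Ω → Fin N) (hmeas : ∀ k, Measurable (I k))
    (hindep : iIndepFun I P)
    (hdist : ∀ k i, P {ω | I k ω = i} = ENNReal.ofReal (p i))
    (x₀ : X) (x : ℕ → Ω → X) (hx0 : ∀ ω, x 0 ω = x₀)
    (hx : ∀ k ω, x (k + 1) ω = f (I k ω) (x k ω))
    (L : ℝ) (hL : 0 ≤ L) (g : X → ℝ) (hgc : Continuous g)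
    (hglip : ∀ a b, |g a - g b| ≤ L * dist a b) :
    ∀ᵐ ω ∂P, Tendsto (fun k : ℕ => (1 / (k : ℝ)) * ∑ j ∈ Finset.range k, g (x j ω))
        atTop (nhds (∫ y, g y ∂μ)) := by
  classical
  have hNe : Nonempty (Fin N) := ⟨⟨0, hN⟩⟩
  -- contraction factor and diameter
  set c : ℝ := ∑ i, p i * (r i : ℝ) with hcdef
  have hc0 : 0 ≤ c := Finset.sum_nonneg fun i _ => mul_nonneg (hp i).le (r i).coe_nonneg
  have hc1 : c < 1 := by
    calc c < ∑ i, p i := Finset.sum_lt_sum_of_nonempty Finset.univ_nonempty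
            (fun i _ => by
              have hri : (r i : ℝ) < 1 := by exact_mod_cast hr i
              nlinarith [hp i, (r i).coe_nonneg])
      _ = 1 := hpsum
  set D : ℝ := Metric.diam (Set.univ : Set X) with hDdef
  have hD0 : 0 ≤ D := Metric.diam_nonneg
  have hdistD : ∀ a b : X, dist a b ≤ D := fun a b =>
    Metric.dist_le_diam_of_mem (isCompact_univ.isBounded) trivial trivial
  -- the transfer operator
  set T : (X → ℝ) → X → ℝ := fun u z => ∑ i, p i * u (f i z) with hTdef
  have stepCont : ∀ {u : X → ℝ}, Continuous u → Continuous (T u) := by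
    intro u hu
    exact continuous_finset_sum _ fun i _ => continuous_const.mul (hu.comp (hf i).continuous)
  have stepBound : ∀ {u : X → ℝ} {M : ℝ}, (∀ z, |u z| ≤ M) → ∀ z, |T u z| ≤ M := by
    intro u M hu z
    calc |T u z| ≤ ∑ i, |p i * u (f i z)| := Finset.abs_sum_le_sum_abs _ _
      _ ≤ ∑ i, p i * M := by
          apply Finset.sum_le_sum
          intro i _
          rw [abs_mul, abs_of_pos (hp i)]
          exact mul_le_mul_of_nonneg_left (hu _) (hp i).le
      _ = M := by rw [← Finset.sum_mul, hpsum, one_mul]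
  have stepLip : ∀ {u : X → ℝ} {K : ℝ}, 0 ≤ K → (∀ a b, |u a - u b| ≤ K * dist a b) →
      ∀ a b, |T u a - T u b| ≤ (c * K) * dist a b := by
    intro u K hK hu a b
    have h1 : T u a - T u b = ∑ i, p i * (u (f i a) - u (f i b)) := by
      rw [hTdef]; simp only []
      rw [← Finset.sum_sub_distrib]
      congr 1; funext i; ring
    calc |T u a - T u b| ≤ ∑ i, |p i * (u (f i a) - u (f i b))| := by
          rw [h1]; exact Finset.abs_sum_le_sum_abs _ _
      _ ≤ ∑ i, p i * ((r i : ℝ) * (K * dist a b)) := by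
          apply Finset.sum_le_sum
          intro i _
          rw [abs_mul, abs_of_pos (hp i)]
          apply mul_le_mul_of_nonneg_left _ (hp i).le
          calc |u (f i a) - u (f i b)| ≤ K * dist (f i a) (f i b) := hu _ _
            _ ≤ K * ((r i : ℝ) * dist a b) :=
                mul_le_mul_of_nonneg_left ((hf i).dist_le_mul a b) hK
            _ = (r i : ℝ) * (K * dist a b) := by ring
      _ = (c * K) * dist a b := by
          rw [hcdef, Finset.sum_mul, Finset.sum_mul]
          exact Finset.sum_congr rfl fun i _ => by ring
  -- uniform bound on g
  set M : ℝ := |g x₀| + L * D with hMdef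
  have hM0 : 0 ≤ M := by positivity
  have hgM : ∀ z, |g z| ≤ M := by
    intro z
    have h1 := hglip z x₀
    have h2 := hdistD z x₀
    have h3 := abs_sub_abs_le_abs_sub (g z) (g x₀)
    nlinarith
  -- properties of iterates
  have iterCont : ∀ n, Continuous (T^[n] g) := by
    intro n
    induction n with
    | zero => simpa using hgc
    | succ n ih => rw [Function.iterate_succ_apply']; exact stepCont ih
  have iterBound : ∀ n z, |T^[n] g z| ≤ M := by
    intro n
    induction n with
    | zero => simpa using hgM
    | succ n ih => rw [Function.iterate_succ_apply']; exact stepBound ih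
  have iterLip : ∀ n a b, |T^[n] g a - T^[n] g b| ≤ (c ^ n * L) * dist a b := by
    intro n
    induction n with
    | zero => simpa using hglip
    | succ n ih =>
        intro a b
        rw [Function.iterate_succ_apply']
        have := stepLip (by positivity) ih a b
        calc |T (T^[n] g) a - T (T^[n] g) b| ≤ (c * (c ^ n * L)) * dist a b := this
          _ = (c ^ (n+1) * L) * dist a b := by ring
  have hintC : ∀ {u : X → ℝ}, Continuous u → (∃ B, ∀ z, |u z| ≤ B) → Integrable u μ := by
    rintro u hu ⟨B, hB⟩
    exact ⟨hu.measurable.aestronglyMeasurable,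
      HasFiniteIntegral.of_bounded (C := B) (ae_of_all _ (by simpa [Real.norm_eq_abs] using hB))⟩
  have stepInt : ∀ (u : X → ℝ), Continuous u → (∃ B, ∀ z, |u z| ≤ B) →
      ∫ y, T u y ∂μ = ∫ y, u y ∂μ := by
    rintro u hu ⟨B, hB⟩
    have hmI : ∀ i : Fin N, IsProbabilityMeasure (μ.map (f i)) := fun i =>
      Measure.isProbabilityMeasure_map (hf i).continuous.measurable.aemeasurable
    have hint_map : ∀ i : Fin N, Integrable u (μ.map (f i)) := by
      intro i
      have := hmI i
      exact ⟨hu.measurable.aestronglyMeasurable,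
        HasFiniteIntegral.of_bounded (C := B) (ae_of_all _ (by simpa [Real.norm_eq_abs] using hB))⟩
    have hcomp_int : ∀ i : Fin N, Integrable (fun z => u (f i z)) μ := fun i =>
      hintC (hu.comp (hf i).continuous) ⟨B, fun z => hB _⟩
    have h1 : ∫ y, u y ∂μ = ∑ i, p i * ∫ z, u (f i z) ∂μ := by
      conv_lhs => rw [hμ]
      rw [integral_finset_sum_measure]
      · apply Finset.sum_congr rfl
        intro i _
        rw [integral_smul_measure, ENNReal.toReal_ofReal (hp i).le,
          integral_map (hf i).continuous.measurable.aemeasurable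
            hu.measurable.aestronglyMeasurable]
        rfl
      · intro i _
        rw [integrable_smul_measure
          (by simp only [ne_eq, ENNReal.ofReal_eq_zero, not_le]; exact hp i)
          ENNReal.ofReal_ne_top]
        exact hint_map i
    have h2 : ∫ y, T u y ∂μ = ∑ i, p i * ∫ z, u (f i z) ∂μ := by
      rw [hTdef]
      rw [integral_finset_sum]
      · exact Finset.sum_congr rfl fun i _ => integral_const_mul _ _
      · exact fun i _ => (hcomp_int i).const_mul _
    rw [h1, h2]
  have iterInt : ∀ n, ∫ y, T^[n] g y ∂μ = ∫ y, g y ∂μ := by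
    intro n
    induction n with
    | zero => simp
    | succ n ih =>
        rw [Function.iterate_succ_apply', stepInt _ (iterCont n) ⟨M, iterBound n⟩, ih]
  set c₀ : ℝ := ∫ y, g y ∂μ with hc₀def
  have iterOsc : ∀ n z, |T^[n] g z - c₀| ≤ c ^ n * (L * D) := by
    intro n z
    have h0 : c₀ = ∫ y, T^[n] g y ∂μ := (iterInt n).symm
    have h1 : T^[n] g z - c₀ = ∫ y, (T^[n] g z - T^[n] g y) ∂μ := by
      rw [integral_sub (integrable_const _) (hintC (iterCont n) ⟨M, iterBound n⟩), h0]
      simp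
    rw [h1, ← Real.norm_eq_abs]
    have h2 : ∀ᵐ y ∂μ, ‖T^[n] g z - T^[n] g y‖ ≤ c ^ n * (L * D) := by
      apply ae_of_all
      intro y
      rw [Real.norm_eq_abs]
      calc |T^[n] g z - T^[n] g y| ≤ (c ^ n * L) * dist z y := iterLip n z y
        _ ≤ (c ^ n * L) * D := by
            apply mul_le_mul_of_nonneg_left (hdistD z y) (by positivity)
        _ = c ^ n * (L * D) := by ring
    calc ‖∫ y, (T^[n] g z - T^[n] g y) ∂μ‖ ≤ c ^ n * (L * D) * (μ Set.univ).toReal :=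
        norm_integral_le_of_norm_le_const h2
      _ = c ^ n * (L * D) := by simp
  -- the Poisson equation solution
  have hsummable : ∀ z, Summable (fun n => T^[n] g z - c₀) := by
    intro z
    apply Summable.of_norm_bounded (g := fun n => c ^ n * (L * D))
    · exact (summable_geometric_of_lt_one hc0 hc1).mul_right _
    · intro n; rw [Real.norm_eq_abs]; exact iterOsc n z
  set h : X → ℝ := fun z => ∑' n, (T^[n] g z - c₀) with hhdef
  set K : ℝ := (1 - c)⁻¹ * (L * D) with hKdef
  have hK0 : 0 ≤ K := by
    have : 0 < 1 - c := by linarith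
    positivity
  have hhbound : ∀ z, |h z| ≤ K := by
    intro z
    have h1 : ‖∑' n, (T^[n] g z - c₀)‖ ≤ ∑' n, c ^ n * (L * D) :=
      tsum_of_norm_bounded ((summable_geometric_of_lt_one hc0 hc1).mul_right (L * D)).hasSum
        (fun n => by rw [Real.norm_eq_abs]; exact iterOsc n z)
    rw [Real.norm_eq_abs] at h1
    calc |h z| ≤ ∑' n, c ^ n * (L * D) := h1
      _ = (∑' n : ℕ, c ^ n) * (L * D) := tsum_mul_right
      _ = K := by rw [tsum_geometric_of_lt_one hc0 hc1, hKdef]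
  have hhcont : Continuous h := by
    apply continuous_tsum (fun n => (iterCont n).sub continuous_const)
      ((summable_geometric_of_lt_one hc0 hc1).mul_right _)
    intro n z
    rw [Real.norm_eq_abs]
    exact iterOsc n z
  have hTh : ∀ z, T h z = ∑' n, (T^[n+1] g z - c₀) := by
    intro z
    have hstep : ∀ i : Fin N, p i * h (f i z) = ∑' n, p i * (T^[n] g (f i z) - c₀) := by
      intro i; rw [hhdef]; exact tsum_mul_left.symm
    calc T h z = ∑ i, ∑' n, p i * (T^[n] g (f i z) - c₀) :=
          Finset.sum_congr rfl fun i _ => hstep i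
      _ = ∑' n, ∑ i, p i * (T^[n] g (f i z) - c₀) :=
          (Summable.tsum_finsetSum (fun i _ => (hsummable (f i z)).mul_left _)).symm
      _ = ∑' n, (T^[n+1] g z - c₀) := by
          apply tsum_congr
          intro n
          rw [Function.iterate_succ_apply']
          calc ∑ i, p i * (T^[n] g (f i z) - c₀)
              = ∑ i, (p i * T^[n] g (f i z) - p i * c₀) :=
                Finset.sum_congr rfl fun i _ => by ring
            _ = (∑ i, p i * T^[n] g (f i z)) - ∑ i, p i * c₀ := Finset.sum_sub_distrib _ _
            _ = T (T^[n] g) z - c₀ := by rw [← Finset.sum_mul, hpsum, one_mul]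
  have hPoisson : ∀ z, h z - T h z = g z - c₀ := by
    intro z
    have h1 : h z = (T^[0] g z - c₀) + ∑' n, (T^[n+1] g z - c₀) :=
      (hsummable z).tsum_eq_zero_add
    rw [hTh z, h1]
    simp
  -- elementary bound |a - b| ≤ 2B
  have habs2 : ∀ (a b B : ℝ), |a| ≤ B → |b| ≤ B → |a - b| ≤ 2 * B := by
    intro a b B ha hb
    rw [sub_eq_add_neg]
    calc |a + -b| ≤ |a| + |-b| := abs_add_le _ _
      _ ≤ 2 * B := by rw [abs_neg]; linarith
  -- measurability of the orbit
  have hfprod : Measurable (fun q : X × Fin N => f q.2 q.1) :=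
    measurable_from_prod_countable_left fun i => (hf i).continuous.measurable
  have hxmeas : ∀ k, Measurable (x k) := by
    intro k
    induction k with
    | zero =>
        have e : x 0 = fun _ => x₀ := funext hx0
        rw [e]; exact measurable_const
    | succ k ih =>
        have e : x (k + 1) = fun ω => f (I k ω) (x k ω) := funext fun ω => hx k ω
        rw [e]
        exact hfprod.comp (ih.prodMk (hmeas k))
  -- the coordinate representation of the orbit
  set W : ∀ l : ℕ, Ω → (Fin l → Fin N) := fun l ω j => I (j : ℕ) ω with hWdef
  have hWmeas : ∀ l, Measurable (W l) := fun l => measurable_pi_lambda _ fun j => hmeas _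
  have hxrep : ∀ l ω, x l ω = cgTraj f x₀ l (W l ω) := by
    intro l
    induction l with
    | zero => intro ω; rw [hx0 ω, cgTraj_zero]
    | succ l ih =>
        intro ω
        rw [hx l ω, ih ω, cgTraj_succ]
        exact rfl
  -- independence of I l from the past
  have hindW : ∀ l : ℕ, IndepFun (I l) (W l) P := by
    intro l
    have hdisj : Disjoint ({l} : Finset ℕ) (Finset.range l) :=
      Finset.disjoint_singleton_left.mpr (by simp)
    have h1 := hindep.indepFun_finset {l} (Finset.range l) hdisj hmeas
    have h2 := h1.comp
      (φ := fun v : (({l} : Finset ℕ) → Fin N) => v ⟨l, Finset.mem_singleton_self l⟩)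
      (ψ := fun v : (↥(Finset.range l) → Fin N) =>
        fun j : Fin l => v ⟨(j : ℕ), Finset.mem_range.mpr j.isLt⟩)
      (measurable_pi_apply (X := fun _ : ({l} : Finset ℕ) => Fin N) _)
      (measurable_pi_lambda _ fun j => measurable_pi_apply (X := fun _ : (Finset.range l) => Fin N) _)
    exact h2
  -- the splitting identity for expectations
  have hIndicator : ∀ (l : ℕ) (i : Fin N),
      ∫ ω, (if I l ω = i then (1:ℝ) else 0) ∂P = p i := by
    intro l i
    have hs : MeasurableSet {ω | I l ω = i} := hmeas l (measurableSet_singleton i)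
    have e : (fun ω => if I l ω = i then (1:ℝ) else 0)
        = Set.indicator {ω | I l ω = i} (1 : Ω → ℝ) := by
      funext ω
      by_cases hω : I l ω = i <;> simp [Set.indicator_apply, Set.mem_setOf_eq, hω]
    rw [e, integral_indicator_one hs, measureReal_def, hdist l i, ENNReal.toReal_ofReal (hp i).le]
  have hExpSplit : ∀ (l : ℕ) (i : Fin N) (Φ : (Fin l → Fin N) → ℝ),
      ∫ ω, (if I l ω = i then (1:ℝ) else 0) * Φ (W l ω) ∂P
        = p i * ∫ ω, Φ (W l ω) ∂P := by
    intro l i Φ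
    have hind : IndepFun (fun ω => if I l ω = i then (1:ℝ) else 0)
        (fun ω => Φ (W l ω)) P := by
      have := (hindW l).comp (φ := fun v : Fin N => if v = i then (1:ℝ) else 0) (ψ := Φ)
        (measurable_of_countable _) (measurable_of_countable _)
      exact this
    have hm1 : AEStronglyMeasurable (fun ω => if I l ω = i then (1:ℝ) else 0) P :=
      (((measurable_of_countable (fun v : Fin N => if v = i then (1:ℝ) else 0))).comp
        (hmeas l)).aestronglyMeasurable
    have hm2 : AEStronglyMeasurable (fun ω => Φ (W l ω)) P :=
      ((measurable_of_countable Φ).comp (hWmeas l)).aestronglyMeasurable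
    have h1 := hind.integral_mul_eq_mul_integral hm1 hm2
    calc ∫ ω, (if I l ω = i then (1:ℝ) else 0) * Φ (W l ω) ∂P
        = (∫ ω, (if I l ω = i then (1:ℝ) else 0) ∂P) * ∫ ω, Φ (W l ω) ∂P := h1
      _ = p i * ∫ ω, Φ (W l ω) ∂P := by rw [hIndicator l i]
  -- the martingale differences
  have hThbound : ∀ z, |T h z| ≤ K := stepBound hhbound
  set d : ℕ → Ω → ℝ := fun j ω => h (x (j + 1) ω) - T h (x j ω) with hddef
  have hdbound : ∀ j ω, |d j ω| ≤ 2 * K := fun j ω =>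
    habs2 _ _ _ (hhbound (x (j + 1) ω)) (hThbound (x j ω))
  have hdmeas : ∀ j, Measurable (d j) := fun j =>
    (hhcont.measurable.comp (hxmeas (j + 1))).sub
      ((stepCont hhcont).measurable.comp (hxmeas j))
  set Mart : ℕ → Ω → ℝ := fun k ω => ∑ j ∈ Finset.range k, d j ω with hMartdef
  have hMartmeas : ∀ k, Measurable (Mart k) := fun k =>
    Finset.measurable_sum _ fun j _ => hdmeas j
  -- representation of d j as a function of the first l coordinates
  have hdrep : ∀ (j l : ℕ) (hjl : j + 1 ≤ l) (ω : Ω),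
      d j ω = (fun σ : Fin l → Fin N =>
        h (cgTraj f x₀ (j + 1) (fun t => σ (Fin.castLE hjl t))) -
        T h (cgTraj f x₀ j (fun t => σ (Fin.castLE (Nat.le_of_succ_le hjl) t)))) (W l ω) := by
    intro j l hjl ω
    have e1 : x (j + 1) ω = cgTraj f x₀ (j + 1) (fun t => W l ω (Fin.castLE hjl t)) := by
      rw [hxrep (j + 1) ω]
      exact rfl
    have e2 : x j ω = cgTraj f x₀ j
        (fun t => W l ω (Fin.castLE (Nat.le_of_succ_le hjl) t)) := by
      rw [hxrep j ω]
      exact rfl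
    rw [hddef]
    simp only []
    rw [e1, e2]
  -- orthogonality of the martingale differences
  have horth : ∀ j l : ℕ, j < l → ∫ ω, d j ω * d l ω ∂P = 0 := by
    intro j l hjl
    set Ψ : (Fin l → Fin N) → ℝ := fun σ =>
      h (cgTraj f x₀ (j + 1) (fun t => σ (Fin.castLE hjl t))) -
      T h (cgTraj f x₀ j (fun t => σ (Fin.castLE (Nat.le_of_succ_le hjl) t))) with hΨdef
    set Φ : Fin N → (Fin l → Fin N) → ℝ := fun i σ =>
      Ψ σ * (h (f i (cgTraj f x₀ l σ)) - T h (cgTraj f x₀ l σ)) with hΦdef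
    have hΨbound : ∀ σ, |Ψ σ| ≤ 2 * K := fun σ => habs2 _ _ _ (hhbound _) (hThbound _)
    have hΦbound : ∀ i σ, |Φ i σ| ≤ (2 * K) * (2 * K) := by
      intro i σ
      rw [hΦdef]
      simp only []
      rw [abs_mul]
      exact mul_le_mul (hΨbound σ) (habs2 _ _ _ (hhbound _) (hThbound _)) (abs_nonneg _)
        (by linarith)
    have hrepr : ∀ ω, d j ω * d l ω
        = ∑ i, (if I l ω = i then (1:ℝ) else 0) * Φ i (W l ω) := by
      intro ω
      have e1 : d j ω = Ψ (W l ω) := hdrep j l hjl ω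
      have e2 : d l ω = h (f (I l ω) (cgTraj f x₀ l (W l ω)))
          - T h (cgTraj f x₀ l (W l ω)) := by
        rw [hddef]
        simp only []
        rw [hx l ω, hxrep l ω]
      rw [e1, e2]
      have e3 : ∀ i : Fin N, (if I l ω = i then (1:ℝ) else 0) * Φ i (W l ω)
          = if I l ω = i then Φ i (W l ω) else 0 := fun i => by
        by_cases hi : I l ω = i <;> simp [hi]
      rw [Finset.sum_congr rfl fun i _ => e3 i, Finset.sum_ite_eq]
      simp [hΦdef]
    have hΦint : ∀ i, Integrable (fun ω => Φ i (W l ω)) P := fun i =>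
      cg_integrable_of_bdd ((measurable_of_countable (Φ i)).comp (hWmeas l))
        (fun ω => hΦbound i (W l ω))
    have hint : ∫ ω, d j ω * d l ω ∂P = ∑ i, p i * ∫ ω, Φ i (W l ω) ∂P := by
      calc ∫ ω, d j ω * d l ω ∂P
          = ∫ ω, ∑ i, (if I l ω = i then (1:ℝ) else 0) * Φ i (W l ω) ∂P := by
            exact integral_congr_ae (ae_of_all _ hrepr)
        _ = ∑ i, ∫ ω, (if I l ω = i then (1:ℝ) else 0) * Φ i (W l ω) ∂P := by
            apply integral_finset_sum
            intro i _
            apply cg_integrable_of_bdd (C := (2 * K) * (2 * K))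
            · exact (((measurable_of_countable
                (fun v : Fin N => if v = i then (1:ℝ) else 0))).comp (hmeas l)).mul
                ((measurable_of_countable (Φ i)).comp (hWmeas l))
            · intro ω
              rw [abs_mul]
              have h4 : |if I l ω = i then (1:ℝ) else 0| ≤ 1 := by
                by_cases hi : I l ω = i <;> simp [hi]
              have h5 := hΦbound i (W l ω)
              nlinarith [abs_nonneg (Φ i (W l ω)), abs_nonneg (if I l ω = i then (1:ℝ) else 0),
                hK0]
        _ = ∑ i, p i * ∫ ω, Φ i (W l ω) ∂P :=
            Finset.sum_congr rfl fun i _ => hExpSplit l i (Φ i)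
    have hzero : ∀ σ, ∑ i, p i * Φ i σ = 0 := by
      intro σ
      have e3 : ∀ i : Fin N, p i * Φ i σ
          = Ψ σ * (p i * h (f i (cgTraj f x₀ l σ)) - p i * T h (cgTraj f x₀ l σ)) := by
        intro i; rw [hΦdef]; ring
      rw [Finset.sum_congr rfl fun i _ => e3 i, ← Finset.mul_sum, Finset.sum_sub_distrib,
        ← Finset.sum_mul, hpsum, one_mul]
      have e4 : ∑ i, p i * h (f i (cgTraj f x₀ l σ)) = T h (cgTraj f x₀ l σ) := rfl
      rw [e4]
      simp
    rw [hint]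
    have e5 : ∑ i, p i * ∫ ω, Φ i (W l ω) ∂P = ∫ ω, ∑ i, p i * Φ i (W l ω) ∂P := by
      rw [integral_finset_sum _ (fun i _ => (hΦint i).const_mul _)]
      exact Finset.sum_congr rfl fun i _ => (integral_const_mul _ _).symm
    rw [e5]
    have e6 : (fun ω => ∑ i, p i * Φ i (W l ω)) = fun _ => (0:ℝ) :=
      funext fun ω => hzero (W l ω)
    rw [e6]
    simp
  -- second moment bound for the martingale
  have hdint : ∀ j l2 : ℕ, Integrable (fun ω => d j ω * d l2 ω) P := by
    intro j l2
    apply cg_integrable_of_bdd ((hdmeas j).mul (hdmeas l2)) (C := (2 * K) * (2 * K))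
    intro ω
    rw [Pi.mul_apply, abs_mul]
    exact mul_le_mul (hdbound j ω) (hdbound l2 ω) (abs_nonneg _) (by linarith)
  have hM2 : ∀ k, ∫ ω, (Mart k ω) ^ 2 ∂P ≤ (2 * K) ^ 2 * k := by
    intro k
    have e1 : ∀ ω, (Mart k ω) ^ 2
        = ∑ j ∈ Finset.range k, ∑ l2 ∈ Finset.range k, d j ω * d l2 ω := by
      intro ω
      rw [hMartdef]
      simp only []
      rw [pow_two, Finset.sum_mul_sum]
    have e2 : ∫ ω, (Mart k ω) ^ 2 ∂P
        = ∑ j ∈ Finset.range k, ∑ l2 ∈ Finset.range k, ∫ ω, d j ω * d l2 ω ∂P := by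
      rw [integral_congr_ae (ae_of_all _ e1),
        integral_finset_sum _ (fun j _ => integrable_finset_sum _ (fun l2 _ => hdint j l2))]
      exact Finset.sum_congr rfl fun j _ => integral_finset_sum _ fun l2 _ => hdint j l2
    have e3 : ∀ j l2 : ℕ, ∫ ω, d j ω * d l2 ω ∂P ≤ if j = l2 then (2 * K) ^ 2 else 0 := by
      intro j l2
      rcases lt_trichotomy j l2 with hlt | heq | hgt
      · rw [horth j l2 hlt, if_neg (Nat.ne_of_lt hlt)]
      · subst heq
        rw [if_pos rfl]
        calc ∫ ω, d j ω * d j ω ∂P ≤ ∫ _ω, (2 * K) ^ 2 ∂P := by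
              apply integral_mono (hdint j j) (integrable_const _)
              intro ω
              show d j ω * d j ω ≤ (2 * K) ^ 2
              have h6 : d j ω * d j ω = |d j ω| * |d j ω| := (abs_mul_abs_self _).symm
              rw [h6, pow_two]
              exact mul_le_mul (hdbound j ω) (hdbound j ω) (abs_nonneg _) (by linarith)
          _ = (2 * K) ^ 2 := by simp
      · have e7 : (fun ω => d j ω * d l2 ω) = fun ω => d l2 ω * d j ω :=
          funext fun ω => mul_comm _ _
        rw [e7, horth l2 j hgt, if_neg (Nat.ne_of_gt hgt)]
    calc ∫ ω, (Mart k ω) ^ 2 ∂P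
        = ∑ j ∈ Finset.range k, ∑ l2 ∈ Finset.range k, ∫ ω, d j ω * d l2 ω ∂P := e2
      _ ≤ ∑ j ∈ Finset.range k, ∑ l2 ∈ Finset.range k, (if j = l2 then (2 * K) ^ 2 else 0) :=
          Finset.sum_le_sum fun j _ => Finset.sum_le_sum fun l2 _ => e3 j l2
      _ = ∑ j ∈ Finset.range k, (if j ∈ Finset.range k then (2 * K) ^ 2 else 0) :=
          Finset.sum_congr rfl fun j _ => Finset.sum_ite_eq _ j _
      _ = (2 * K) ^ 2 * k := by
          rw [Finset.sum_congr rfl fun j hj => if_pos hj]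
          simp [mul_comm]
  -- bound for the martingale itself
  have hMartbound : ∀ k ω, |Mart k ω| ≤ 2 * K * k := by
    intro k ω
    calc |Mart k ω| ≤ ∑ j ∈ Finset.range k, |d j ω| := Finset.abs_sum_le_sum_abs _ _
      _ ≤ ∑ _j ∈ Finset.range k, 2 * K := Finset.sum_le_sum fun j _ => hdbound j ω
      _ = 2 * K * k := by simp [mul_comm]
  -- almost sure convergence along squares
  have hsq : ∀ᵐ ω ∂P, Tendsto
      (fun n : ℕ => Mart ((n + 1) ^ 2) ω / ((((n + 1) ^ 2 : ℕ)) : ℝ)) atTop (nhds 0) := by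
    apply cg_ae_tendsto_zero_of_sum_sq P _
      (fun n => (hMartmeas ((n + 1) ^ 2)).div_const _)
      (fun n => (2 * K) ^ 2 / ((n : ℝ) + 1) ^ 2)
    · have h1 : Summable (fun n : ℕ => (1:ℝ) / ((n:ℝ) + 1) ^ 2) := by
        have := (_root_.summable_nat_add_iff 1).2 (Real.summable_one_div_nat_pow.2 one_lt_two)
        simpa [add_comm] using this
      have h2 := h1.mul_left ((2 * K) ^ 2)
      apply h2.congr
      intro n
      field_simp
    · intro n
      set m : ℕ := (n + 1) ^ 2 with hm
      have hmpos : (0:ℝ) < (m:ℝ) := by positivity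
      have e2 : ((m:ℕ) : ℝ) = ((n:ℝ) + 1) ^ 2 := by rw [hm]; push_cast; ring
      have hYb : ∀ ω, |(Mart m ω / (m:ℝ)) ^ 2| ≤ (2 * K) ^ 2 := by
        intro ω
        have hq : |Mart m ω / (m:ℝ)| ≤ 2 * K := by
          rw [abs_div, abs_of_pos hmpos, div_le_iff₀ hmpos]
          exact hMartbound m ω
        calc |(Mart m ω / (m:ℝ)) ^ 2| = |Mart m ω / (m:ℝ)| ^ 2 := by
              rw [abs_of_nonneg (sq_nonneg _), sq_abs]
          _ ≤ (2 * K) ^ 2 := pow_le_pow_left₀ (abs_nonneg _) hq 2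
      have hint : Integrable (fun ω => (Mart m ω / (m:ℝ)) ^ 2) P :=
        cg_integrable_of_bdd (((hMartmeas m).div_const _).pow_const 2) hYb
      have hIY : ∫ ω, (Mart m ω / (m:ℝ)) ^ 2 ∂P ≤ (2 * K) ^ 2 / ((n:ℝ) + 1) ^ 2 := by
        have e1 : (fun ω => (Mart m ω / (m:ℝ)) ^ 2)
            = fun ω => (Mart m ω) ^ 2 / ((m:ℝ)) ^ 2 := funext fun ω => div_pow _ _ _
        rw [e1, integral_div, div_le_iff₀ (by positivity)]
        calc ∫ ω, (Mart m ω) ^ 2 ∂P ≤ (2 * K) ^ 2 * m := hM2 m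
          _ = (2 * K) ^ 2 / ((n:ℝ) + 1) ^ 2 * ((m:ℝ)) ^ 2 := by
              rw [e2]; field_simp
      calc ∫⁻ ω, ENNReal.ofReal ((Mart m ω / (m:ℝ)) ^ 2) ∂P
          = ENNReal.ofReal (∫ ω, (Mart m ω / (m:ℝ)) ^ 2 ∂P) :=
            (ofReal_integral_eq_lintegral_ofReal hint (ae_of_all _ fun ω => sq_nonneg _)).symm
        _ ≤ ENNReal.ofReal ((2 * K) ^ 2 / ((n:ℝ) + 1) ^ 2) := ENNReal.ofReal_le_ofReal hIY
  -- final assembly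
  filter_upwards [hsq] with ω hω
  have hgap : Tendsto (fun k : ℕ => Mart k ω / k) atTop (nhds 0) := by
    apply cg_gap_fill (C := 2 * K) (by linarith) _ (by rw [hMartdef]; simp)
    · intro k
      have e : Mart (k + 1) ω - Mart k ω = d k ω := by
        show (∑ j ∈ Finset.range (k + 1), d j ω) - ∑ j ∈ Finset.range k, d j ω = d k ω
        rw [Finset.sum_range_succ]; ring
      rw [e]; exact hdbound k ω
    · have e : (fun n : ℕ => Mart ((n + 1) ^ 2) ω / ((n + 1 : ℕ) ^ 2 : ℝ))
          = fun n : ℕ => Mart ((n + 1) ^ 2) ω / ((((n + 1) ^ 2 : ℕ)) : ℝ) := by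
        funext n; push_cast; ring_nf
      rw [e]; exact hω
  show Tendsto _ atTop (nhds c₀)
  apply tendsto_sub_nhds_zero_iff.mp
  have hident : ∀ k : ℕ, ∑ j ∈ Finset.range k, g (x j ω)
      = k * c₀ + ((h (x 0 ω) - h (x k ω)) + Mart k ω) := by
    intro k
    have e1 : ∀ j, g (x j ω) = c₀ + ((h (x j ω) - h (x (j + 1) ω)) + d j ω) := by
      intro j
      have h7 := hPoisson (x j ω)
      have e2 : d j ω = h (x (j + 1) ω) - T h (x j ω) := rfl
      rw [e2]; linarith
    rw [Finset.sum_congr rfl fun j _ => e1 j, Finset.sum_add_distrib, Finset.sum_add_distrib,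
      Finset.sum_const, Finset.card_range, Finset.sum_range_sub' (fun j => h (x j ω))]
    have e3 : Mart k ω = ∑ j ∈ Finset.range k, d j ω := rfl
    rw [← e3, nsmul_eq_mul]
  have hA : Tendsto (fun k : ℕ => (h (x 0 ω) - h (x k ω)) / k) atTop (nhds 0) := by
    apply squeeze_zero_norm' (a := fun k : ℕ => 2 * K / k)
    · filter_upwards [eventually_ge_atTop 1] with k hk
      have hkpos : (0:ℝ) < k := by exact_mod_cast hk
      rw [norm_div, Real.norm_eq_abs, Real.norm_eq_abs, abs_of_pos hkpos]
      gcongr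
      exact habs2 _ _ _ (hhbound _) (hhbound _)
    · exact Tendsto.div_atTop tendsto_const_nhds tendsto_natCast_atTop_atTop
  have hfinal : (fun k : ℕ => (1 / (k : ℝ)) * ∑ j ∈ Finset.range k, g (x j ω) - c₀)
      =ᶠ[atTop] (fun k : ℕ => (h (x 0 ω) - h (x k ω)) / k + Mart k ω / k) := by
    filter_upwards [eventually_ge_atTop 1] with k hk
    have hkpos : (0:ℝ) < k := by exact_mod_cast hk
    rw [hident k]
    field_simp
    ring
  exact Tendsto.congr' hfinal.symm (by simpa using hA.add hgap)


/-- Ergodicity of the chaos game for an IFS with weights on a nonempty compact metric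
space: with probability one, the empirical measures of the random orbit converge weakly
(i.e. integrals of every bounded continuous function converge) to the measure attractor. -/
theorem chaos_game_empirical_measures_converge
    {X : Type*} [MetricSpace X] [CompactSpace X] [Nonempty X]
    [MeasurableSpace X] [BorelSpace X]
    {N : ℕ} (hN : 1 ≤ N) (f : Fin N → X → X) (r : Fin N → ℝ≥0)
    (hr : ∀ i, r i < 1) (hf : ∀ i, LipschitzWith (r i) (f i))
    (p : Fin N → ℝ) (hp : ∀ i, 0 < p i) (hpsum : ∑ i, p i = 1)
    (μ : Measure X) [IsProbabilityMeasure μ]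
    (hμ : μ = ∑ i, ENNReal.ofReal (p i) • μ.map (f i))
    {Ω : Type*} [MeasurableSpace Ω] (P : Measure Ω) [IsProbabilityMeasure P]
    (I : ℕ → Ω → Fin N) (hmeas : ∀ k, Measurable (I k))
    (hindep : iIndepFun I P)
    (hdist : ∀ k i, P {ω | I k ω = i} = ENNReal.ofReal (p i))
    (x₀ : X) (x : ℕ → Ω → X) (hx0 : ∀ ω, x 0 ω = x₀)
    (hx : ∀ k ω, x (k + 1) ω = f (I k ω) (x k ω)) :
    ∀ᵐ ω ∂P, ∀ g : BoundedContinuousFunction X ℝ,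
      Tendsto (fun k : ℕ => (1 / (k : ℝ)) * ∑ j ∈ Finset.range k, g (x j ω))
        atTop (nhds (∫ y, g y ∂μ)) := by
  obtain ⟨u, hu⟩ := TopologicalSpace.exists_dense_seq C(X, ℝ)
  have happrox : ∀ nm : ℕ × ℕ, ∃ (L : ℝ≥0) (g' : X → ℝ), LipschitzWith L g' ∧
      ∀ z, |g' z - u nm.1 z| ≤ 1 / ((nm.2 : ℝ) + 1) :=
    fun nm => cg_lipschitz_approx (u nm.1) (by positivity)
  choose Lf gf hgflip hgfapprox using happrox
  have hae : ∀ᵐ ω ∂P, ∀ nm : ℕ × ℕ,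
      Tendsto (fun k : ℕ => (1 / (k : ℝ)) * ∑ j ∈ Finset.range k, gf nm (x j ω))
        atTop (nhds (∫ y, gf nm y ∂μ)) := by
    rw [ae_all_iff]
    intro nm
    apply cg_key hN f r hr hf p hp hpsum μ hμ P I hmeas hindep hdist x₀ x hx0 hx
      (Lf nm : ℝ) (Lf nm).coe_nonneg (gf nm) (hgflip nm).continuous
    intro a b
    have := (hgflip nm).dist_le_mul a b
    simpa [Real.dist_eq] using this
  filter_upwards [hae] with ω hω
  intro g
  rw [Metric.tendsto_atTop]
  intro ε hε
  set gc : C(X, ℝ) := ⟨fun z => g z, g.continuous⟩ with hgcdef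
  obtain ⟨n, hn⟩ := Metric.denseRange_iff.1 hu gc (ε / 8) (by positivity)
  obtain ⟨m, hm⟩ : ∃ m : ℕ, 1 / ((m : ℝ) + 1) < ε / 8 := by
    obtain ⟨m, hm⟩ := exists_nat_gt (8 / ε)
    refine ⟨m, ?_⟩
    rw [div_lt_iff₀ (by positivity)]
    rw [div_lt_iff₀ hε] at hm
    nlinarith
  have hclose : ∀ z, |gf (n, m) z - g z| ≤ ε / 4 := by
    intro z
    have h1 := hgfapprox (n, m) z
    have h2 : |u n z - g z| ≤ ε / 8 := by
      have h3 := ContinuousMap.dist_apply_le_dist (f := gc) (g := u n) z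
      have h4 : dist (gc z) (u n z) < ε / 8 := lt_of_le_of_lt h3 hn
      rw [Real.dist_eq] at h4
      rw [abs_sub_comm]
      exact le_of_lt (by simpa [hgcdef] using h4)
    calc |gf (n, m) z - g z| ≤ |gf (n, m) z - u n z| + |u n z - g z| := abs_sub_le _ _ _
      _ ≤ ε / 8 + ε / 8 := add_le_add (le_trans h1 hm.le) h2
      _ = ε / 4 := by ring
  have hgint : Integrable (fun z => g z) μ :=
    cg_integrable_of_bdd g.continuous.measurable (C := ‖g‖)
      (fun z => by simpa [Real.norm_eq_abs] using g.norm_coe_le_norm z)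
  have hgfint : Integrable (gf (n, m)) μ := by
    apply cg_integrable_of_bdd (hgflip (n, m)).continuous.measurable (C := ‖g‖ + ε / 4)
    intro z
    have h1 := hclose z
    have h2 : |g z| ≤ ‖g‖ := by simpa [Real.norm_eq_abs] using g.norm_coe_le_norm z
    have h3 := abs_sub_abs_le_abs_sub (gf (n, m) z) (g z)
    linarith
  have hIclose : |∫ y, gf (n, m) y ∂μ - ∫ y, g y ∂μ| ≤ ε / 4 := by
    rw [← integral_sub hgfint hgint, ← Real.norm_eq_abs]
    calc ‖∫ y, (gf (n, m) y - g y) ∂μ‖ ≤ ε / 4 * (μ Set.univ).toReal :=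
        norm_integral_le_of_norm_le_const
          (ae_of_all _ fun z => by rw [Real.norm_eq_abs]; exact hclose z)
      _ = ε / 4 := by simp
  obtain ⟨K₀, hK₀⟩ := Metric.tendsto_atTop.1 (hω (n, m)) (ε / 4) (by positivity)
  refine ⟨max K₀ 1, fun k hk => ?_⟩
  have hk1 : 1 ≤ k := le_trans (le_max_right _ _) hk
  have hkK : K₀ ≤ k := le_trans (le_max_left _ _) hk
  have hkpos : (0 : ℝ) < k := by exact_mod_cast hk1
  have h3 := hK₀ k hkK
  rw [Real.dist_eq] at h3 ⊢
  have h4 : |(1 / (k : ℝ)) * ∑ j ∈ Finset.range k, g (x j ω)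
      - (1 / (k : ℝ)) * ∑ j ∈ Finset.range k, gf (n, m) (x j ω)| ≤ ε / 4 := by
    rw [← mul_sub, ← Finset.sum_sub_distrib, abs_mul]
    have h5 : |∑ j ∈ Finset.range k, (g (x j ω) - gf (n, m) (x j ω))| ≤ k * (ε / 4) := by
      calc |∑ j ∈ Finset.range k, (g (x j ω) - gf (n, m) (x j ω))|
          ≤ ∑ j ∈ Finset.range k, |g (x j ω) - gf (n, m) (x j ω)| :=
            Finset.abs_sum_le_sum_abs _ _
        _ ≤ ∑ _j ∈ Finset.range k, ε / 4 := Finset.sum_le_sum fun j _ => by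
            rw [abs_sub_comm]; exact hclose _
        _ = k * (ε / 4) := by simp [mul_comm]
    have h6 : |1 / (k : ℝ)| = 1 / (k : ℝ) := abs_of_pos (by positivity)
    rw [h6]
    calc 1 / (k : ℝ) * |∑ j ∈ Finset.range k, (g (x j ω) - gf (n, m) (x j ω))|
        ≤ 1 / (k : ℝ) * (k * (ε / 4)) := by
          apply mul_le_mul_of_nonneg_left h5 (by positivity)
      _ = ε / 4 := by field_simp
  calc |(1 / (k : ℝ)) * ∑ j ∈ Finset.range k, g (x j ω) - ∫ y, g y ∂μ|
      ≤ |(1 / (k : ℝ)) * ∑ j ∈ Finset.range k, g (x j ω)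
          - (1 / (k : ℝ)) * ∑ j ∈ Finset.range k, gf (n, m) (x j ω)|
        + |(1 / (k : ℝ)) * ∑ j ∈ Finset.range k, gf (n, m) (x j ω) - ∫ y, g y ∂μ| :=
        abs_sub_le _ _ _
    _ ≤ |(1 / (k : ℝ)) * ∑ j ∈ Finset.range k, g (x j ω)
          - (1 / (k : ℝ)) * ∑ j ∈ Finset.range k, gf (n, m) (x j ω)|
        + (|(1 / (k : ℝ)) * ∑ j ∈ Finset.range k, gf (n, m) (x j ω) - ∫ y, gf (n, m) y ∂μ|
          + |∫ y, gf (n, m) y ∂μ - ∫ y, g y ∂μ|) := by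
        have := abs_sub_le ((1 / (k : ℝ)) * ∑ j ∈ Finset.range k, gf (n, m) (x j ω))
          (∫ y, gf (n, m) y ∂μ) (∫ y, g y ∂μ)
        linarith
    _ < ε := by
        have h7 : |(1 / (k : ℝ)) * ∑ j ∈ Finset.range k, gf (n, m) (x j ω)
            - ∫ y, gf (n, m) y ∂μ| < ε / 4 := h3
        linarith
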